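/- Let n ≥ 1, k ≥ 1, and let p = p_1 p_2 ⋯ p_j be a pre-perm with 1 ≤ j ≤ n. Then the first element of the list Rec(p,k) is p itself, and the last element of Rec(p,k) is rev(p^{+(k−1)}), the reversal of p with every colour incremented by k−1 modulo k. -/

import Mathlib

/-- Increment the colour of every symbol of a coloured pre-permutation by `s`, modulo `k`. -/
def colShift (k s : ℕ) (p : List (ℕ × ℕ)) : List (ℕ × ℕ) :=
  p.map (fun x => (x.1, (x.2 + s) % k))

/-- The colour-incrementing prefix-reversal of length `j` (a "flip"):
reverse the first `j` symbols and increment their colours by 1 modulo `k`. -/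
def cflip (k j : ℕ) (p : List (ℕ × ℕ)) : List (ℕ × ℕ) :=
  colShift k 1 (p.take j).reverse ++ p.drop j

/-- `p` is a `k`-coloured permutation of order `n`: its values are a permutation
of `{1,…,n}` and all its colours lie in `{0,…,k-1}`. -/
def IsCPerm (n k : ℕ) (p : List (ℕ × ℕ)) : Prop :=
  (p.map Prod.fst).Perm ((List.range n).map (· + 1)) ∧ ∀ x ∈ p, x.2 < k

/-- `p` is a pre-perm: distinct values from `{1,…,n}`, colours in `{0,…,k-1}`. -/
def IsPrePerm (n k : ℕ) (p : List (ℕ × ℕ)) : Prop :=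
  (p.map Prod.fst).Nodup ∧ ∀ x ∈ p, (1 ≤ x.1 ∧ x.1 ≤ n) ∧ x.2 < k

/-- The circular string `ρ(p) = p^{+(k-1)} · p^{+(k-2)} ⋯ p^{+0}`. -/
def rho (k : ℕ) (p : List (ℕ × ℕ)) : List (ℕ × ℕ) :=
  ((List.range k).reverse).flatMap (fun s => colShift k s p)

/-- `ρ(p)_i`: the length `j-1` contiguous subword of the circular string `ρ(p)`
ending with `r_{i-1}` (1-based indices modulo `m = k·j`, where `j = p.length`). -/
def rhoSub (k : ℕ) (p : List (ℕ × ℕ)) (i : ℕ) : List (ℕ × ℕ) :=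
  (List.range (p.length - 1)).map
    (fun t => (rho k p).getD ((i + t + k * p.length - p.length) % (k * p.length)) (0, 0))

/-- Fuel-indexed version of the recursive listing `Rec(p,k)`; `fuel = p.length`. -/
def RecAux (k : ℕ) : ℕ → List (ℕ × ℕ) → List (List (ℕ × ℕ))
  | 0, p => (List.range k).map (fun s => colShift k s p)
  | fuel + 1, p =>
    if p.length ≤ 1 then (List.range k).map (fun s => colShift k s p)
    else ((List.range (k * p.length)).reverse).flatMap
      (fun i => (RecAux k fuel (rhoSub k p (i + 1))).map (fun q => q ++ [(rho k p).getD i (0, 0)]))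

/-- The recursive listing `Rec(p,k)`:
`Rec(p₁,k) = p₁, p₁^{+1}, …, p₁^{+(k-1)}` when `p` has length 1, and
`Rec(p,k) = Rec(ρ(p)_m,k)·r_m, Rec(ρ(p)_{m-1},k)·r_{m-1}, …, Rec(ρ(p)_1,k)·r_1` otherwise. -/
def RecList (k : ℕ) (p : List (ℕ × ℕ)) : List (List (ℕ × ℕ)) :=
  RecAux k p.length p

/-- The identity coloured permutation `1⁰2⁰⋯n⁰`. -/
def idPerm (n : ℕ) : List (ℕ × ℕ) := (List.range n).map (fun i => (i + 1, 0))

/-- For `n,k ≥ 1` and a pre-perm `p` with `1 ≤ |p| ≤ n`, the first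
element of `Rec(p,k)` is `p` and the last element is `rev(p^{+(k-1)})`. -/
lemma colShift_length (k s : ℕ) (p : List (ℕ × ℕ)) : (colShift k s p).length = p.length := by
  simp [colShift]

lemma colShift_zero (k : ℕ) (p : List (ℕ × ℕ)) (h : ∀ x ∈ p, x.2 < k) :
    colShift k 0 p = p := by
  unfold colShift
  conv_rhs => rw [← List.map_id p]
  exact List.map_congr_left (fun a ha => by simp [Nat.mod_eq_of_lt (h a ha)])

lemma colShift_tail (k s : ℕ) (p : List (ℕ × ℕ)) :
    colShift k s p.tail = (colShift k s p).tail := by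
  simp [colShift, List.map_tail]

lemma range_map_getD {α} (l : List α) (d : α) (n : ℕ) (h : n ≤ l.length) :
    (List.range n).map (fun t => l.getD t d) = l.take n := by
  apply List.ext_getElem
  · simp [h]
  · intro i h1 h2
    simp only [List.getElem_map, List.getElem_range, List.getElem_take]
    have hi : i < l.length := by simp at h1; omega
    rw [List.getD_eq_getElem l d hi]

lemma getD_tail {α} (l : List α) (t : ℕ) (d : α) : l.tail.getD t d = l.getD (t + 1) d := by
  simp [List.getD, ← List.drop_one, List.getElem?_drop, Nat.add_comm]

lemma rho_front (k' : ℕ) (p : List (ℕ × ℕ)) :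
    rho (k'+1) p = colShift (k'+1) k' p
      ++ ((List.range k').reverse).flatMap (fun s => colShift (k'+1) s p) := by
  simp [rho, List.range_succ]

lemma rho_back (k' : ℕ) (p : List (ℕ × ℕ)) (h : ∀ x ∈ p, x.2 < k'+1) :
    ∃ F : List (ℕ × ℕ), F.length = k' * p.length ∧ rho (k'+1) p = F ++ p := by
  refine ⟨((List.range k').map Nat.succ).reverse.flatMap (fun s => colShift (k'+1) s p), ?_, ?_⟩
  · rw [List.length_flatMap]
    rw [List.map_congr_left (g := fun _ => p.length)
      (fun a _ => by simp [colShift_length])]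
    simp [Function.comp_def, List.map_const', mul_comm]
  · rw [rho, List.range_succ_eq_map]
    simp only [List.reverse_cons, List.flatMap_append, List.flatMap_singleton]
    rw [colShift_zero _ _ h]

lemma rhoSub_top (k : ℕ) (hk : 1 ≤ k) (p : List (ℕ × ℕ)) (h : ∀ x ∈ p, x.2 < k)
    (hp : 1 ≤ p.length) : rhoSub k p (k * p.length) = p.dropLast := by
  obtain ⟨k', rfl⟩ : ∃ k', k = k' + 1 := ⟨k - 1, by omega⟩
  obtain ⟨F, hF, hrho⟩ := rho_back k' p h
  have hmj : (k' + 1) * p.length = F.length + p.length := by rw [hF]; ring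
  unfold rhoSub
  rw [List.map_congr_left (g := fun t => p.getD t (0, 0)) ?_]
  · rw [range_map_getD p (0,0) (p.length - 1) (by omega), ← List.dropLast_eq_take]
  · intro t ht
    simp only [List.mem_range] at ht
    rw [hmj]
    have h1 : F.length + p.length + t + (F.length + p.length) - p.length
        = (F.length + p.length) + (F.length + t) := by omega
    rw [h1, Nat.add_mod_left, Nat.mod_eq_of_lt (by omega)]
    rw [hrho, List.getD_append_right F p _ _ (by omega)]
    congr 1
    omega

lemma rhoSub_one (k : ℕ) (hk : 1 ≤ k) (p : List (ℕ × ℕ)) (h : ∀ x ∈ p, x.2 < k)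
    (hp : 1 ≤ p.length) : rhoSub k p 1 = p.tail := by
  obtain ⟨k', rfl⟩ : ∃ k', k = k' + 1 := ⟨k - 1, by omega⟩
  obtain ⟨F, hF, hrho⟩ := rho_back k' p h
  have hmj : (k' + 1) * p.length = F.length + p.length := by rw [hF]; ring
  unfold rhoSub
  rw [List.map_congr_left (g := fun t => p.tail.getD t (0, 0)) ?_]
  · rw [range_map_getD p.tail (0,0) (p.length - 1) (by simp),
      List.take_of_length_le (by simp)]
  · intro t ht
    simp only [List.mem_range] at ht
    rw [hmj]
    have h1 : 1 + t + (F.length + p.length) - p.length = F.length + (t + 1) := by omega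
    rw [h1, Nat.mod_eq_of_lt (by omega)]
    rw [hrho, List.getD_append_right F p _ _ (by omega)]
    simp only [getD_tail]
    congr 1
    omega

lemma rho_getD_zero (k' : ℕ) (p : List (ℕ × ℕ)) (hp : 1 ≤ p.length) :
    (rho (k'+1) p).getD 0 (0,0) = (colShift (k'+1) k' p).getD 0 (0,0) := by
  rw [rho_front]
  exact List.getD_append _ _ _ 0 (by rw [colShift_length]; omega)

lemma rho_getD_last (k : ℕ) (hk : 1 ≤ k) (p : List (ℕ × ℕ)) (h : ∀ x ∈ p, x.2 < k)
    (hp : 1 ≤ p.length) :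
    (rho k p).getD (k * p.length - 1) (0,0) = p.getD (p.length - 1) (0,0) := by
  obtain ⟨k', rfl⟩ : ∃ k', k = k' + 1 := ⟨k - 1, by omega⟩
  obtain ⟨F, hF, hrho⟩ := rho_back k' p h
  have hmj : (k' + 1) * p.length = F.length + p.length := by rw [hF]; ring
  rw [hmj, hrho, List.getD_append_right F p _ _ (by omega)]
  congr 1
  omega

lemma recAux_spec (k : ℕ) (hk : 1 ≤ k) :
    ∀ fuel (p : List (ℕ × ℕ)), p.length = fuel → 1 ≤ fuel → (∀ x ∈ p, x.2 < k) →
    (RecAux k fuel p).head? = some p ∧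
    (RecAux k fuel p).getLast? = some (colShift k (k - 1) p).reverse := by
  intro fuel
  induction fuel with
  | zero => intro p _ h; omega
  | succ f ih =>
    intro p hlen _ hc
    obtain ⟨k', rfl⟩ : ∃ k', k = k' + 1 := ⟨k - 1, by omega⟩
    by_cases h1 : p.length ≤ 1
    · -- base case: p is a singleton
      obtain ⟨a, rfl⟩ := List.length_eq_one_iff.mp (by omega : p.length = 1)
      rw [RecAux, if_pos h1]
      constructor
      · rw [List.range_succ_eq_map]
        simp only [List.map_cons, List.head?_cons]
        rw [colShift_zero _ _ hc]
      · rw [List.range_succ]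
        simp [colShift]
    · -- recursive case
      have hj2 : 2 ≤ p.length := by omega
      have hf : 1 ≤ f := by omega
      have hpn : p ≠ [] := by intro h; simp [h] at hj2
      have hmpos : 1 ≤ (k' + 1) * p.length := Nat.mul_pos (by omega) (by omega)
      have hm2 : (k' + 1) * p.length = ((k' + 1) * p.length - 1) + 1 := by omega
      have htop : rhoSub (k' + 1) p ((k' + 1) * p.length) = p.dropLast :=
        rhoSub_top _ hk p hc (by omega)
      have hone : rhoSub (k' + 1) p 1 = p.tail := rhoSub_one _ hk p hc (by omega)
      rw [RecAux, if_neg h1]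
      constructor
      · -- head
        rw [hm2, List.range_succ]
        simp only [List.reverse_append, List.reverse_cons, List.reverse_nil,
          List.nil_append, List.singleton_append, List.flatMap_cons]
        rw [List.head?_append, List.head?_map]
        have hi1 : (k' + 1) * p.length - 1 + 1 = (k' + 1) * p.length := by omega
        rw [hi1, htop]
        obtain ⟨ihh, -⟩ := ih p.dropLast (by simp [hlen]) hf
          (fun x hx => hc x ((List.dropLast_sublist p).subset hx))
        rw [ihh]
        show some _ = some _
        congr 1
        rw [← hi1, ← hm2, rho_getD_last _ hk p hc (by omega)]
        rw [List.getD_eq_getElem p _ (by omega), ← List.getLast_eq_getElem (l := p) hpn]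
        exact List.dropLast_append_getLast hpn
      · -- last
        rw [hm2, List.range_succ_eq_map]
        simp only [List.reverse_cons, List.flatMap_append, List.flatMap_singleton]
        rw [List.getLast?_append, List.getLast?_map, hone]
        obtain ⟨-, ihl⟩ := ih p.tail (by simp [hlen]) hf
          (fun x hx => hc x (List.mem_of_mem_tail hx))
        rw [ihl]
        show some _ = some _
        congr 1
        simp only [Nat.add_sub_cancel]
        rw [colShift_tail, rho_getD_zero _ p (by omega)]
        have hq : colShift (k' + 1) k' p ≠ [] := by
          intro h; apply hpn; simpa [colShift] using h
        obtain ⟨b, q, hbq⟩ := List.exists_cons_of_ne_nil hq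
        rw [hbq]
        simp [List.getD]

theorem recList_head_and_getLast (n k : ℕ) (hn : 1 ≤ n) (hk : 1 ≤ k)
    (p : List (ℕ × ℕ)) (hp : IsPrePerm n k p) (hj1 : 1 ≤ p.length) (hjn : p.length ≤ n) :
    (RecList k p).head? = some p ∧
    (RecList k p).getLast? = some (colShift k (k - 1) p).reverse := by
  exact recAux_spec k hk p.length p rfl hj1 (fun x hx => (hp.2 x hx).2)
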